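/- The depth of the unique half-full tree with l leaves equals the ceiling of log base 2 of l. -/

import Mathlib

inductive BTree : Type
  | leaf : BTree
  | node : BTree → BTree → BTree
deriving DecidableEq

namespace BTree

/-- Number of leaves of a binary tree. -/
def leaves : BTree → ℕ
  | leaf => 1
  | node l r => leaves l + leaves r

/-- Depth (height) of a binary tree. -/
def depth : BTree → ℕ
  | leaf => 0
  | node l r => max (depth l) (depth r) + 1

/-- Number of internal (non-leaf) nodes. -/
def internals : BTree → ℕ
  | leaf => 0
  | node l r => internals l + internals r + 1

/-- A complete binary tree: full, with all leaves at the same depth. -/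
def IsComplete : BTree → Prop
  | leaf => True
  | node l r => IsComplete l ∧ IsComplete r ∧ depth l = depth r

/-- A half-full tree (haft): every non-leaf node has two children, and its
left child is the root of a complete subtree containing at least half of the
node's leaf-descendants. -/
def IsHaft : BTree → Prop
  | leaf => True
  | node l r => IsComplete l ∧ leaves r ≤ leaves l ∧ IsHaft r

end BTree

namespace BTree

theorem leaves_pos (t : BTree) : 0 < t.leaves := by
  induction t with
  | leaf => simp [leaves]
  | node l r ihl ihr => simp [leaves]; omega

theorem complete_leaves (t : BTree) (h : t.IsComplete) : t.leaves = 2 ^ t.depth := by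
  induction t with
  | leaf => simp [leaves, depth]
  | node l r ihl ihr =>
    obtain ⟨hl, hr, hd⟩ := h
    simp [leaves, depth, ihl hl, ihr hr, hd, pow_succ]
    ring

theorem haft_depth_aux (t : BTree) (ht : t.IsHaft) :
    t.depth = Nat.clog 2 t.leaves := by
  induction t with
  | leaf => simp [leaves, depth]
  | node l r ihl ihr =>
    obtain ⟨hl, hle, hr⟩ := ht
    have hL := complete_leaves l hl
    have hrpos := leaves_pos r
    have hrd := ihr hr
    set d := l.depth with hd
    -- depth r = clog 2 (leaves r) ≤ d since leaves r ≤ 2^d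
    have h1 : r.depth ≤ d := by
      rw [hrd]
      rw [Nat.clog_le_iff_le_pow (by norm_num : 1 < 2)]
      omega
    have hdep : (node l r).depth = d + 1 := by
      simp [depth, max_eq_left h1]
      exact max_eq_left h1
    have hlv : (node l r).leaves = 2 ^ d + r.leaves := by
      simp [leaves, hL]
    rw [hdep, hlv]
    have hub : Nat.clog 2 (2 ^ d + r.leaves) ≤ d + 1 := by
      rw [Nat.clog_le_iff_le_pow (by norm_num : 1 < 2), pow_succ]
      omega
    have hlb : d + 1 ≤ Nat.clog 2 (2 ^ d + r.leaves) := by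
      rw [Nat.succ_le_iff, Nat.lt_clog_iff_pow_lt (by norm_num : 1 < 2)]
      omega
    omega

end BTree

/-- The depth of a half-full tree with `l` leaves is `⌈log₂ l⌉`. -/
theorem haft_depth (l : ℕ) (hl : 0 < l) (t : BTree) (ht : t.IsHaft)
    (hleaves : t.leaves = l) : t.depth = Nat.clog 2 l := by
  subst hleaves; exact BTree.haft_depth_aux t ht
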